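/- Every infinite-dimensional real Banach space X admits an equivalent norm N such that (X, N) has a Δ-point and the dual space equipped with the dual norm N*(x*) := sup_{N(y) ≤ 1} x*(y) has a weak* super Δ-point: there is x* with N*(x*) = 1 such that sup{ N*(x* − y*) : y* ∈ W, N*(y*) ≤ 1 } = 2 for every weak*-open subset W of X* containing x*. -/

import Mathlib

open NormedSpace Topology Filter

/-- `N` is an equivalent norm on the normed space `Z`. -/
def IsEquivNorm (Z : Type*) [NormedAddCommGroup Z] [NormedSpace ℝ Z] (N : Z → ℝ) : Prop :=
  (∀ z w : Z, N (z + w) ≤ N z + N w) ∧ (∀ (a : ℝ) (z : Z), N (a • z) = |a| * N z) ∧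
  (∃ c C : ℝ, 0 < c ∧ 0 < C ∧ ∀ z : Z, c * ‖z‖ ≤ N z ∧ N z ≤ C * ‖z‖)

/-- The norm `N` on `Z` admits a Δ-point. -/
def HasDeltaPointForNorm (Z : Type*) [NormedAddCommGroup Z] [NormedSpace ℝ Z]
    (N : Z → ℝ) : Prop :=
  ∃ z₀ : Z, N z₀ = 1 ∧ ∀ f : Z →L[ℝ] ℝ, sSup (f '' {y : Z | N y ≤ 1}) = 1 →
    ∀ ε : ℝ, 0 < ε → 1 - ε < f z₀ →
      sSup ((fun y => N (z₀ - y)) '' {y : Z | N y ≤ 1 ∧ 1 - ε < f y}) = 2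

/-- The dual norm of the norm `N` on `Z`: `N*(f) = sup { f y : N y ≤ 1 }`. -/
noncomputable def dualNormOf (Z : Type*) [NormedAddCommGroup Z] [NormedSpace ℝ Z]
    (N : Z → ℝ) (f : StrongDual ℝ Z) : ℝ :=
  sSup (f '' {y : Z | N y ≤ 1})

/-- The dual norm `N*` of the norm `N` on `Z` admits a weak* super Δ-point: a functional
`g` with `N* g = 1` such that every relatively weak*-open subset of the `N*`-unit ball
containing `g` contains functionals whose `N*`-distance to `g` is arbitrarily close to
`2`.  (The weak* topology is unchanged under an equivalent renorming of `Z`.) -/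
def DualHasWeakStarSuperDeltaPointForNorm (Z : Type*) [NormedAddCommGroup Z]
    [NormedSpace ℝ Z] (N : Z → ℝ) : Prop :=
  ∃ g : StrongDual ℝ Z, dualNormOf Z N g = 1 ∧
    ∀ U : Set (WeakDual ℝ Z), IsOpen U → StrongDual.toWeakDual g ∈ U →
      sSup ((fun h => dualNormOf Z N (g - h)) ''
        {h : StrongDual ℝ Z | dualNormOf Z N h ≤ 1 ∧
          StrongDual.toWeakDual h ∈ U}) = 2

set_option maxHeartbeats 1000000
set_option synthInstance.maxHeartbeats 400000

namespace DeltaRenormAux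

variable {X : Type*} [NormedAddCommGroup X] [NormedSpace ℝ X]

lemma exists_mem_ker (hinf : ¬ FiniteDimensional ℝ X) (S : Finset (X →L[ℝ] ℝ)) :
    ∃ x : X, x ≠ 0 ∧ ∀ f ∈ S, f x = 0 := by
  classical
  set L : X →ₗ[ℝ] (S → ℝ) := LinearMap.pi (fun f => ((f : X →L[ℝ] ℝ) : X →ₗ[ℝ] ℝ)) with hL
  have hker : LinearMap.ker L ≠ ⊥ := by
    intro h
    exact hinf (FiniteDimensional.of_injective L (LinearMap.ker_eq_bot.mp h))
  obtain ⟨x, hx, hx0⟩ := Submodule.exists_mem_ne_zero_of_ne_bot hker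
  refine ⟨x, hx0, fun f hf => ?_⟩
  have h1 := LinearMap.mem_ker.mp hx
  have h2 := congrFun h1 ⟨f, hf⟩
  simpa [hL] using h2

lemma exists_unit_far (hinf : ¬ FiniteDimensional ℝ X) (E : Submodule ℝ X)
    [FiniteDimensional ℝ E] (S : Finset (X →L[ℝ] ℝ)) :
    ∃ y : X, ‖y‖ = 1 ∧ (∀ f ∈ S, f y = 0) ∧ ∀ e ∈ E, (1:ℝ)/4 ≤ ‖y - e‖ := by
  classical
  have hcomp : IsCompact (Metric.sphere (0 : E) 1) := isCompact_sphere _ _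
  have htb := hcomp.totallyBounded
  rw [Metric.totallyBounded_iff] at htb
  obtain ⟨t, htfin, htcov⟩ := htb (1/4) (by norm_num)
  have hchi : ∀ c : E, ∃ χ : X →L[ℝ] ℝ, ((c : X) ≠ 0) → (‖χ‖ = 1 ∧ χ (c : X) = ‖(c : X)‖) := by
    intro c
    by_cases hc : (c : X) = 0
    · exact ⟨0, fun h => absurd hc h⟩
    · obtain ⟨χ, h1, h2⟩ := exists_dual_vector ℝ (c : X) (norm_ne_zero_iff.mpr hc)
      exact ⟨χ, fun _ => ⟨h1, by simpa using h2⟩⟩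
  choose χ hχ using hchi
  obtain ⟨x, hx0, hxker⟩ := exists_mem_ker hinf (S ∪ htfin.toFinset.image χ)
  set y : X := ‖x‖⁻¹ • x with hy
  have hy1 : ‖y‖ = 1 := by
    simp [hy, norm_smul, inv_mul_cancel₀ (norm_ne_zero_iff.mpr hx0)]
  have hyker : ∀ g : X →L[ℝ] ℝ, g ∈ S ∪ htfin.toFinset.image χ → g y = 0 := by
    intro g hg
    have := hxker g hg
    simp [hy, this]
  refine ⟨y, hy1, fun f hf => hyker f (Finset.mem_union_left _ hf), ?_⟩
  intro e he
  by_cases hsmall : ‖e‖ ≤ 3/4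
  · have h2 : ‖y‖ - ‖e‖ ≤ ‖y - e‖ := by
      simpa using norm_sub_norm_le y e
    rw [hy1] at h2
    linarith
  · push_neg at hsmall
    have he0 : e ≠ 0 := by
      intro h; rw [h, norm_zero] at hsmall; linarith
    have hne : ‖e‖ ≠ 0 := norm_ne_zero_iff.mpr he0
    set eh : E := ⟨‖e‖⁻¹ • e, E.smul_mem _ he⟩ with hehdef
    have hehnorm : ‖(eh : X)‖ = 1 := by
      simp [hehdef, norm_smul, inv_mul_cancel₀ hne]
    have hehsph : eh ∈ Metric.sphere (0 : E) 1 := by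
      simp only [Metric.mem_sphere, dist_zero_right]
      rw [show ‖eh‖ = ‖(eh : X)‖ from rfl, hehnorm]
    obtain ⟨c, hct, hcball⟩ := Set.mem_iUnion₂.mp (htcov hehsph)
    have hdist : ‖(eh : X) - (c : X)‖ < 1/4 := by
      have hd : dist eh c < 1/4 := Metric.mem_ball.mp hcball
      rw [Subtype.dist_eq, dist_eq_norm] at hd
      exact hd
    have hcnorm : (3:ℝ)/4 < ‖(c : X)‖ := by
      have h3 := norm_sub_norm_le (eh : X) (c : X)
      rw [hehnorm] at h3
      linarith [h3.trans_lt hdist]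
    have hc0 : (c : X) ≠ 0 := by
      intro h; rw [h, norm_zero] at hcnorm; linarith
    obtain ⟨hχn, hχc⟩ := hχ c hc0
    have hχy : χ c y = 0 :=
      hyker (χ c) (Finset.mem_union_right _ (Finset.mem_image_of_mem χ
        (htfin.mem_toFinset.mpr hct)))
    have hχeh : (1:ℝ)/2 < χ c (eh : X) := by
      have h1 : χ c (eh : X) = χ c (c : X) + χ c ((eh : X) - (c : X)) := by
        rw [← map_add]; congr 1; abel
      have h2 : |χ c ((eh : X) - (c : X))| ≤ ‖(eh : X) - (c : X)‖ := by
        calc |χ c ((eh : X) - (c : X))| ≤ ‖χ c‖ * ‖(eh : X) - (c : X)‖ := (χ c).le_opNorm _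
          _ = ‖(eh : X) - (c : X)‖ := by rw [hχn, one_mul]
      have h3 := (abs_le.mp h2).1
      rw [h1, hχc]
      linarith
    have hχe : (1:ℝ)/4 ≤ χ c e := by
      have hee : e = ‖e‖ • (eh : X) := by
        simp [hehdef, smul_smul, mul_inv_cancel₀ hne]
      rw [hee, map_smul, smul_eq_mul]
      nlinarith [hsmall, hχeh]
    have habs : χ c e ≤ ‖y - e‖ := by
      have h4 : |χ c (y - e)| ≤ ‖y - e‖ := by
        calc |χ c (y - e)| ≤ ‖χ c‖ * ‖y - e‖ := (χ c).le_opNorm _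
          _ = ‖y - e‖ := by rw [hχn, one_mul]
      have h5 : χ c (y - e) = -(χ c e) := by rw [map_sub, hχy]; ring
      have := (abs_le.mp h4).1
      rw [h5] at this
      linarith
    linarith

lemma exists_functional (E : Submodule ℝ X) [FiniteDimensional ℝ E] {y : X}
    (hy : ∀ e ∈ E, (1:ℝ)/4 ≤ ‖y - e‖) :
    ∃ f : X →L[ℝ] ℝ, ‖f‖ ≤ 4 ∧ f y = 1 ∧ ∀ e ∈ E, f e = 0 := by
  classical
  haveI hEc : IsClosed (E : Set X) := Submodule.closed_of_finiteDimensional E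
  set Q := X ⧸ E
  -- lower bound on quotient norm of y
  have hql : (1:ℝ)/4 ≤ ‖(Submodule.Quotient.mk y : Q)‖ := by
    by_contra h
    push_neg at h
    obtain ⟨m, hm, hmlt⟩ := Submodule.Quotient.norm_mk_lt (Submodule.Quotient.mk y : Q)
      (show 0 < 1/4 - ‖(Submodule.Quotient.mk y : Q)‖ by linarith)
    have hmem : y - m ∈ E := by
      have := (Submodule.Quotient.eq E).mp hm
      simpa [neg_sub] using E.neg_mem this
    have := hy (y - m) hmem
    have hym : y - (y - m) = m := by abel
    rw [hym] at this
    linarith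
  have hne : (Submodule.Quotient.mk y : Q) ≠ 0 := by
    intro h
    rw [h, norm_zero] at hql
    linarith
  obtain ⟨g, hg1, hg2'⟩ := exists_dual_vector ℝ (Submodule.Quotient.mk y : Q) (norm_ne_zero_iff.mpr hne)
  have hg2 : g (Submodule.Quotient.mk y) = ‖(Submodule.Quotient.mk y : Q)‖ := by
    exact_mod_cast hg2'
  -- the quotient map as a continuous linear map
  set q : X →L[ℝ] Q := LinearMap.mkContinuous E.mkQ 1
    (fun x => by rw [one_mul]; exact Submodule.Quotient.norm_mk_le E x) with hq
  have hqapp : ∀ x : X, q x = Submodule.Quotient.mk x := fun x => rfl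
  set d : ℝ := ‖(Submodule.Quotient.mk y : Q)‖ with hd
  refine ⟨d⁻¹ • (g.comp q), ?_, ?_, ?_⟩
  · have hnq : ‖q‖ ≤ 1 := LinearMap.mkContinuous_norm_le _ (by norm_num) _
    have hcomp : ‖g.comp q‖ ≤ 1 := by
      calc ‖g.comp q‖ ≤ ‖g‖ * ‖q‖ := ContinuousLinearMap.opNorm_comp_le _ _
        _ ≤ 1 := by rw [hg1]; linarith
    have hstep : ‖d⁻¹ • (g.comp q)‖ ≤ ‖(d⁻¹ : ℝ)‖ * ‖g.comp q‖ := ContinuousLinearMap.opNorm_smul_le _ _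
    have hd0 : (0:ℝ) < d := lt_of_lt_of_le (by norm_num) hql
    have hdn : ‖(d⁻¹ : ℝ)‖ = d⁻¹ := by
      rw [Real.norm_eq_abs, abs_of_nonneg (inv_nonneg.mpr hd0.le)]
    have hinv : d⁻¹ ≤ 4 := by
      rw [show (4:ℝ) = (1/4)⁻¹ by norm_num]
      exact inv_anti₀ (by norm_num) hql
    calc ‖d⁻¹ • (g.comp q)‖ ≤ ‖(d⁻¹ : ℝ)‖ * ‖g.comp q‖ := hstep
      _ ≤ 4 * 1 := by
          rw [hdn]
          exact mul_le_mul hinv hcomp (norm_nonneg _) (by norm_num)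
      _ = 4 := by norm_num
  · simp only [ContinuousLinearMap.smul_apply, ContinuousLinearMap.comp_apply, hqapp]
    rw [show g (Submodule.Quotient.mk y) = d from hg2]
    simp [inv_mul_cancel₀ (show d ≠ 0 by intro h; rw [h] at hql; norm_num at hql)]
  · intro e he
    simp only [ContinuousLinearMap.smul_apply, ContinuousLinearMap.comp_apply, hqapp]
    rw [show (Submodule.Quotient.mk e : Q) = 0 from (Submodule.Quotient.mk_eq_zero E).mpr he]
    simp


lemma exists_extend (hinf : ¬ FiniteDimensional ℝ X) (l : List (X × (X →L[ℝ] ℝ))) :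
    ∃ p : X × (X →L[ℝ] ℝ), ‖p.1‖ = 1 ∧ ‖p.2‖ ≤ 4 ∧ p.2 p.1 = 1 ∧
      ∀ q ∈ l, q.2 p.1 = 0 ∧ p.2 q.1 = 0 := by
  classical
  set E : Submodule ℝ X := Submodule.span ℝ ((l.map Prod.fst).toFinset : Set X) with hE
  haveI : FiniteDimensional ℝ E := FiniteDimensional.span_of_finite ℝ (Finset.finite_toSet _)
  obtain ⟨y, hy1, hyker, hyfar⟩ := exists_unit_far hinf E ((l.map Prod.snd).toFinset)
  obtain ⟨f, hf4, hfy, hfE⟩ := exists_functional E hyfar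
  refine ⟨(y, f), hy1, hf4, hfy, fun q hq => ⟨?_, ?_⟩⟩
  · exact hyker q.2 (by simp only [List.mem_toFinset, List.mem_map]; exact ⟨q, hq, rfl⟩)
  · refine hfE q.1 (Submodule.subset_span ?_)
    simp only [Finset.coe_sort_coe, List.coe_toFinset, Set.mem_setOf_eq, List.mem_map]
    exact ⟨q, hq, rfl⟩

variable (hinf : ¬ FiniteDimensional ℝ X)

noncomputable def step (l : List (X × (X →L[ℝ] ℝ))) : X × (X →L[ℝ] ℝ) :=
  Classical.choose (exists_extend hinf l)

lemma step_spec (l : List (X × (X →L[ℝ] ℝ))) :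
    ‖(step hinf l).1‖ = 1 ∧ ‖(step hinf l).2‖ ≤ 4 ∧ (step hinf l).2 (step hinf l).1 = 1 ∧
      ∀ q ∈ l, q.2 (step hinf l).1 = 0 ∧ (step hinf l).2 q.1 = 0 :=
  Classical.choose_spec (exists_extend hinf l)

noncomputable def chain : ℕ → List (X × (X →L[ℝ] ℝ))
  | 0 => []
  | n + 1 => chain n ++ [step hinf (chain n)]

lemma mem_chain {n m : ℕ} (h : n < m) : step hinf (chain hinf n) ∈ chain hinf m := by
  induction m with
  | zero => omega
  | succ k ih =>
    rcases Nat.lt_succ_iff_lt_or_eq.mp h with h' | h'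
    · exact List.mem_append_left _ (ih h')
    · subst h'
      exact List.mem_append_right _ (List.mem_singleton_self _)

include hinf in
lemma exists_biorth : ∃ (e : ℕ → X) (f : ℕ → X →L[ℝ] ℝ),
    (∀ n, ‖e n‖ = 1) ∧ (∀ n, ‖f n‖ ≤ 4) ∧
    ∀ m n, f m (e n) = if m = n then 1 else 0 := by
  refine ⟨fun n => (step hinf (chain hinf n)).1, fun n => (step hinf (chain hinf n)).2,
    fun n => (step_spec hinf _).1, fun n => (step_spec hinf _).2.1, fun m n => ?_⟩
  rcases lt_trichotomy m n with h | h | h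
  · rw [if_neg (by omega)]
    exact ((step_spec hinf (chain hinf n)).2.2.2 _ (mem_chain hinf h)).1
  · subst h
    rw [if_pos rfl]
    exact (step_spec hinf (chain hinf m)).2.2.1
  · rw [if_neg (by omega)]
    exact ((step_spec hinf (chain hinf m)).2.2.2 _ (mem_chain hinf h)).2


abbrev Idx : Type := Option (List Bool ⊕ ℕ)

lemma exists_sys (hinf : ¬ FiniteDimensional ℝ X) :
    ∃ (e : Idx → X) (f : Idx → X →L[ℝ] ℝ),
      (∀ i, ‖e i‖ = 1) ∧ (∀ i, ‖f i‖ ≤ 8) ∧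
      (∀ i j, f i (e j) = if i = j then 1 else 0) ∧
      (∀ U : Set (WeakDual ℝ X), IsOpen U → StrongDual.toWeakDual (f none) ∈ U →
        ∃ n : ℕ, StrongDual.toWeakDual (f none - (2:ℝ) • f (some (Sum.inr n))) ∈ U) := by
  classical
  obtain ⟨e₀, f₀, he₀, hf₀, hbio₀⟩ := exists_biorth hinf
  set enc : Idx → ℕ := fun i => Encodable.encode i with henc
  have hencinj : Function.Injective enc := Encodable.encode_injective
  set e : Idx → X := fun i => e₀ (enc i) with he
  set F : Idx → X →L[ℝ] ℝ := fun i => f₀ (enc i) with hF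
  have hbio : ∀ i j : Idx, F i (e j) = if i = j then 1 else 0 := by
    intro i j
    rw [hF, he, hbio₀]
    by_cases h : i = j
    · simp [h]
    · rw [if_neg (fun hc => h (hencinj hc)), if_neg h]
  -- weak* cluster point of the dual-gadget subfamily
  set u : ℕ → StrongDual ℝ X := fun n => F (some (Sum.inr n)) with hu
  set uw : ℕ → WeakDual ℝ X := fun n => StrongDual.toWeakDual (u n) with huw
  set K : Set (WeakDual ℝ X) := WeakDual.toStrongDual ⁻¹' Metric.closedBall 0 4 with hK
  have hKcomp : IsCompact K := WeakDual.isCompact_closedBall (0 : StrongDual ℝ X) 4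
  have humem : ∀ n, uw n ∈ K := by
    intro n
    simp only [hK, Set.mem_preimage, Metric.mem_closedBall, dist_zero_right]
    exact hf₀ _
  have hle : Filter.map uw Filter.atTop ≤ Filter.principal K := by
    rw [Filter.le_principal_iff, Filter.mem_map]
    exact Filter.Eventually.of_forall humem
  obtain ⟨xinf, hxK, hcl⟩ := hKcomp.exists_clusterPt hle
  have hcl' : MapClusterPt xinf Filter.atTop uw := hcl
  set finf : StrongDual ℝ X := WeakDual.toStrongDual xinf with hfinf
  have hfinfnorm : ‖finf‖ ≤ 4 := by
    have := hxK
    simp only [hK, Set.mem_preimage, Metric.mem_closedBall, dist_zero_right] at this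
    exact this
  have hfinfev : ∀ j : Idx, finf (e j) = 0 := by
    intro j
    have hev : ContinuousAt (fun ψ : WeakDual ℝ X => ψ (e j)) xinf :=
      (WeakDual.eval_continuous (e j)).continuousAt
    have hclev : MapClusterPt (xinf (e j)) Filter.atTop ((fun ψ : WeakDual ℝ X => ψ (e j)) ∘ uw) :=
      hcl'.continuousAt_comp hev
    have hevseq : ∀ n, ((fun ψ : WeakDual ℝ X => ψ (e j)) ∘ uw) n
        = if some (Sum.inr n) = j then 1 else 0 := by
      intro n
      have : uw n (e j) = u n (e j) := rfl
      simp only [Function.comp_apply, this, hu, hbio]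
    have htend : Filter.Tendsto ((fun ψ : WeakDual ℝ X => ψ (e j)) ∘ uw) Filter.atTop (𝓝 0) := by
      apply Filter.Tendsto.congr' _ tendsto_const_nhds
      have : ∀ᶠ n in Filter.atTop, some (Sum.inr n) ≠ j := by
        rcases j with _ | jj
        · exact Filter.Eventually.of_forall (fun n => by simp)
        · rcases jj with t | m
          · exact Filter.Eventually.of_forall (fun n => by simp)
          · filter_upwards [Filter.eventually_gt_atTop m] with n hn
            intro hc
            injection hc with hc'
            injection hc' with hc''
            omega
      filter_upwards [this] with n hn
      rw [hevseq n, if_neg hn]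
    -- cluster point of a convergent sequence is its limit
    have : xinf (e j) = 0 := by
      have hne : (𝓝 (xinf (e j)) ⊓ Filter.map ((fun ψ : WeakDual ℝ X => ψ (e j)) ∘ uw)
          Filter.atTop).NeBot := hclev
      have hle2 : (𝓝 (xinf (e j)) ⊓ Filter.map ((fun ψ : WeakDual ℝ X => ψ (e j)) ∘ uw)
          Filter.atTop) ≤ 𝓝 (xinf (e j)) ⊓ 𝓝 0 := inf_le_inf le_rfl htend
      exact eq_of_nhds_neBot (hne.mono hle2)
    rw [hfinf]
    exact this
  -- shifted functionals
  set f : Idx → X →L[ℝ] ℝ := fun i => match i with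
    | some (Sum.inr n) => F (some (Sum.inr n)) - finf
    | i => F i with hf
  have hfeq : ∀ n : ℕ, f (some (Sum.inr n)) = F (some (Sum.inr n)) - finf := fun n => rfl
  have hfnone : f none = F none := rfl
  have hfbio : ∀ i j : Idx, f i (e j) = if i = j then 1 else 0 := by
    intro i j
    rcases i with _ | ti
    · rw [hfnone, hbio]
    · rcases ti with t | n
      · rw [show f (some (Sum.inl t)) = F (some (Sum.inl t)) from rfl, hbio]
      · rw [hfeq, ContinuousLinearMap.sub_apply, hfinfev, hbio, sub_zero]
  refine ⟨e, f, fun i => he₀ _, ?_, hfbio, ?_⟩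
  · intro i
    rcases i with _ | ti
    · exact (hf₀ _).trans (by norm_num)
    · rcases ti with t | n
      · exact (hf₀ _).trans (by norm_num)
      · rw [hfeq]
        calc ‖F (some (Sum.inr n)) - finf‖ ≤ ‖F (some (Sum.inr n))‖ + ‖finf‖ := norm_sub_le _ _
          _ ≤ 4 + 4 := add_le_add (hf₀ _) hfinfnorm
          _ = 8 := by norm_num
  · intro U hU hmem
    -- continuous affine map on the weak dual
    set G : WeakDual ℝ X → WeakDual ℝ X :=
      fun ψ => StrongDual.toWeakDual (f none) - (2:ℝ) • (ψ - xinf) with hG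
    have hGcont : Continuous G := by
      apply Continuous.sub continuous_const
      exact (continuous_id.sub continuous_const).const_smul (2:ℝ)
    have hGxinf : G xinf = StrongDual.toWeakDual (f none) := by
      rw [hG]
      simp
    have hclG : MapClusterPt (StrongDual.toWeakDual (f none)) Filter.atTop (G ∘ uw) := by
      rw [← hGxinf]
      exact hcl'.continuousAt_comp hGcont.continuousAt
    have hGuw : ∀ n, (G ∘ uw) n
        = StrongDual.toWeakDual (f none - (2:ℝ) • f (some (Sum.inr n))) := by
      intro n
      rfl
    have := (mapClusterPt_iff_frequently.mp hclG) U (hU.mem_nhds hmem)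
    obtain ⟨n, hn⟩ := this.exists
    exact ⟨n, by rw [← hGuw n]; exact hn⟩


abbrev JIdx : Type := Unit ⊕ ℕ ⊕ ℕ ⊕ List Bool

/-- tree functional, geometrically damped along the branch to the root -/
noncomputable def phi (fv : Idx → X →L[ℝ] ℝ) : List Bool → (X →L[ℝ] ℝ)
  | [] => (-2 : ℝ) • fv (some (Sum.inl []))
  | b :: t => (-2 : ℝ) • fv (some (Sum.inl (b :: t))) + (2⁻¹ : ℝ) • phi fv t

/-- tree direction vectors -/
noncomputable def wv (ev : Idx → X) (t : List Bool) : X :=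
  ev (some (Sum.inl t)) -
    (2⁻¹ : ℝ) • (ev (some (Sum.inl (true :: t))) + ev (some (Sum.inl (false :: t))))

/-- primal witnesses -/
noncomputable def vv (ev : Idx → X) (t : List Bool) : X := ev none + wv ev t

/-- dual witnesses (vectors) -/
noncomputable def uv (ev : Idx → X) (n : ℕ) : X := ev none + ev (some (Sum.inr n))

/-- dual witnesses (functionals) -/
noncomputable def hfun (fv : Idx → X →L[ℝ] ℝ) (n : ℕ) : X →L[ℝ] ℝ :=
  fv none - (2 : ℝ) • fv (some (Sum.inr n))

/-- primal witness functionals -/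
noncomputable def gfun (fv : Idx → X →L[ℝ] ℝ) (t : List Bool) : X →L[ℝ] ℝ :=
  fv none + phi fv t

noncomputable def Psi (fv : Idx → X →L[ℝ] ℝ) : JIdx → (X →L[ℝ] ℝ)
  | Sum.inl _ => fv none
  | Sum.inr (Sum.inl n) => fv (some (Sum.inr n))
  | Sum.inr (Sum.inr (Sum.inl n)) => hfun fv n
  | Sum.inr (Sum.inr (Sum.inr t)) => gfun fv t

/-- the new norm -/
noncomputable def NN (fv : Idx → X →L[ℝ] ℝ) (x : X) : ℝ :=
  max (‖x‖ / 4) (⨆ j : JIdx, |Psi fv j x|)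

section withSys

variable (ev : Idx → X) (fv : Idx → X →L[ℝ] ℝ)
variable (hev : ∀ i, ‖ev i‖ = 1) (hfv : ∀ i, ‖fv i‖ ≤ 8)
variable (hbio : ∀ i j, fv i (ev j) = if i = j then 1 else 0)

section phiLemmas
include hfv in
lemma phi_norm (t : List Bool) : ‖phi fv t‖ ≤ 32 := by
  induction t with
  | nil =>
      rw [phi]
      calc ‖(-2 : ℝ) • fv (some (Sum.inl []))‖ ≤ ‖(-2:ℝ)‖ * ‖fv (some (Sum.inl []))‖ :=
            ContinuousLinearMap.opNorm_smul_le _ _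
        _ ≤ 2 * 8 := by
            apply mul_le_mul (by simp) (hfv _) (norm_nonneg _) (by norm_num)
        _ ≤ 32 := by norm_num
  | cons b t ih =>
      rw [phi]
      calc ‖(-2 : ℝ) • fv (some (Sum.inl (b :: t))) + (2⁻¹ : ℝ) • phi fv t‖
          ≤ ‖(-2 : ℝ) • fv (some (Sum.inl (b :: t)))‖ + ‖(2⁻¹ : ℝ) • phi fv t‖ := norm_add_le _ _
        _ ≤ (‖(-2:ℝ)‖ * ‖fv (some (Sum.inl (b :: t)))‖) + (‖(2⁻¹:ℝ)‖ * ‖phi fv t‖) :=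
            add_le_add (ContinuousLinearMap.opNorm_smul_le _ _)
              (ContinuousLinearMap.opNorm_smul_le _ _)
        _ ≤ 2 * 8 + 2⁻¹ * 32 := by
            apply add_le_add
            · apply mul_le_mul (by simp) (hfv _) (norm_nonneg _) (by norm_num)
            · apply mul_le_mul (by simp) ih (norm_nonneg _) (by norm_num)
        _ ≤ 32 := by norm_num

include hbio in
lemma phi_none : ∀ t : List Bool, phi fv t (ev none) = 0 := by
  intro t
  induction t with
  | nil => simp [phi, hbio]
  | cons b t ih =>
      simp [phi, hbio, ih]

include hbio in
lemma phi_dual (n : ℕ) : ∀ t : List Bool, phi fv t (ev (some (Sum.inr n))) = 0 := by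
  intro t
  induction t with
  | nil => simp [phi, hbio]
  | cons b t ih =>
      simp [phi, hbio, ih]

include hbio in
lemma fv_w (s t : List Bool) :
    fv (some (Sum.inl s)) (wv ev t) =
      (if s = t then 1 else 0) - (2⁻¹ : ℝ) * ((if s = true :: t then 1 else 0)
        + (if s = false :: t then 1 else 0)) := by
  simp only [wv, map_sub, map_smul, map_add, hbio, smul_eq_mul]
  congr 2 <;> simp

include hbio in
lemma phi_w (s t : List Bool) :
    phi fv s (wv ev t) = if s = t then -2 else 0 := by
  induction s generalizing t with
  | nil =>
      rw [phi]
      simp only [ContinuousLinearMap.smul_apply, fv_w ev fv hbio, smul_eq_mul]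
      rw [if_neg (by simp : ([] : List Bool) ≠ true :: t),
        if_neg (by simp : ([] : List Bool) ≠ false :: t)]
      rcases eq_or_ne ([] : List Bool) t with h | h
      · rw [if_pos h, if_pos h]
        norm_num
      · rw [if_neg h, if_neg h]
        norm_num
  | cons b s ih =>
      rw [phi]
      simp only [ContinuousLinearMap.add_apply, ContinuousLinearMap.smul_apply,
        fv_w ev fv hbio, ih, smul_eq_mul]
      rcases eq_or_ne (b :: s : List Bool) t with h | h
      · -- t = b :: s
        have h1 : (b :: s : List Bool) ≠ true :: t := by
          rw [← h]; intro hc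
          have := congrArg List.length hc
          simp at this
        have h2 : (b :: s : List Bool) ≠ false :: t := by
          rw [← h]; intro hc
          have := congrArg List.length hc
          simp at this
        have h3 : s ≠ t := by
          rw [← h]; intro hc
          have := congrArg List.length hc
          simp at this
        rw [if_pos h, if_pos h, if_neg h1, if_neg h2, if_neg h3]
        norm_num
      · rw [if_neg h, if_neg h]
        rcases eq_or_ne s t with h4 | h4
        · subst h4
          rw [if_pos rfl]
          cases b
          · rw [if_neg (by simp), if_pos rfl]
            norm_num
          · rw [if_pos rfl, if_neg (by simp)]
            norm_num
        · have h5 : (b :: s : List Bool) ≠ true :: t := by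
            intro hc
            rw [List.cons.injEq] at hc
            exact h4 hc.2
          have h6 : (b :: s : List Bool) ≠ false :: t := by
            intro hc
            rw [List.cons.injEq] at hc
            exact h4 hc.2
          rw [if_neg h5, if_neg h6, if_neg h4]
          norm_num

end phiLemmas

section normLemmas

include hfv in
lemma Psi_norm (j : JIdx) : ‖Psi fv j‖ ≤ 40 := by
  rcases j with _ | (n | (n | t))
  · exact (hfv _).trans (by norm_num)
  · exact (hfv _).trans (by norm_num)
  · rw [show Psi fv (Sum.inr (Sum.inr (Sum.inl n))) = hfun fv n from rfl, hfun]
    calc ‖fv none - (2:ℝ) • fv (some (Sum.inr n))‖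
        ≤ ‖fv none‖ + ‖(2:ℝ) • fv (some (Sum.inr n))‖ := norm_sub_le _ _
      _ ≤ 8 + ‖(2:ℝ)‖ * ‖fv (some (Sum.inr n))‖ :=
          add_le_add (hfv _) (ContinuousLinearMap.opNorm_smul_le _ _)
      _ ≤ 8 + 2 * 8 := by
          refine add_le_add le_rfl (mul_le_mul (by simp) (hfv _) (norm_nonneg _) (by norm_num))
      _ ≤ 40 := by norm_num
  · rw [show Psi fv (Sum.inr (Sum.inr (Sum.inr t))) = gfun fv t from rfl, gfun]
    calc ‖fv none + phi fv t‖ ≤ ‖fv none‖ + ‖phi fv t‖ := norm_add_le _ _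
      _ ≤ 8 + 32 := add_le_add (hfv _) (phi_norm fv hfv t)
      _ = 40 := by norm_num

include hfv in
lemma Psi_bdd (x : X) (j : JIdx) : |Psi fv j x| ≤ 40 * ‖x‖ := by
  calc |Psi fv j x| ≤ ‖Psi fv j‖ * ‖x‖ := (Psi fv j).le_opNorm x
    _ ≤ 40 * ‖x‖ := mul_le_mul_of_nonneg_right (Psi_norm fv hfv j) (norm_nonneg x)

include hfv in
lemma NN_bddAbove (x : X) : BddAbove (Set.range fun j : JIdx => |Psi fv j x|) := by
  refine ⟨40 * ‖x‖, fun r hr => ?_⟩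
  obtain ⟨j, rfl⟩ := hr
  exact Psi_bdd fv hfv x j

include hfv in
lemma Psi_le_NN (x : X) (j : JIdx) : |Psi fv j x| ≤ NN fv x :=
  (le_ciSup (NN_bddAbove fv hfv x) j).trans (le_max_right _ _)

lemma norm_le_NN (x : X) : ‖x‖ / 4 ≤ NN fv x := le_max_left _ _

include hfv in
lemma NN_le_norm (x : X) : NN fv x ≤ 40 * ‖x‖ := by
  apply max_le
  · have := norm_nonneg x; linarith
  · exact ciSup_le (Psi_bdd fv hfv x)

include hfv in
lemma NN_add (x y : X) : NN fv (x + y) ≤ NN fv x + NN fv y := by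
  apply max_le
  · have h1 : ‖x + y‖ / 4 ≤ ‖x‖ / 4 + ‖y‖ / 4 := by
      have := norm_add_le x y
      linarith
    exact h1.trans (add_le_add (norm_le_NN fv x) (norm_le_NN fv y))
  · apply ciSup_le
    intro j
    calc |Psi fv j (x + y)| = |Psi fv j x + Psi fv j y| := by rw [map_add]
      _ ≤ |Psi fv j x| + |Psi fv j y| := abs_add_le _ _
      _ ≤ NN fv x + NN fv y := add_le_add (Psi_le_NN fv hfv x j) (Psi_le_NN fv hfv y j)

lemma NN_nonneg (x : X) : 0 ≤ NN fv x :=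
  le_trans (by positivity) (norm_le_NN fv x)

include hfv in
lemma NN_smul (a : ℝ) (x : X) : NN fv (a • x) = |a| * NN fv x := by
  have h1 : ∀ j : JIdx, |Psi fv j (a • x)| = |a| * |Psi fv j x| := by
    intro j
    rw [map_smul, smul_eq_mul, abs_mul]
  have h2 : (⨆ j : JIdx, |Psi fv j (a • x)|) = |a| * ⨆ j : JIdx, |Psi fv j x| := by
    rw [Real.mul_iSup_of_nonneg (abs_nonneg a)]
    exact iSup_congr h1
  rw [NN, NN, h2, norm_smul]
  rw [show ‖a‖ * ‖x‖ / 4 = |a| * (‖x‖/4) by rw [Real.norm_eq_abs]; ring]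
  exact (mul_max_of_nonneg _ _ (abs_nonneg a)).symm

end normLemmas

section valueLemmas

include hfv in
lemma NN_le_one_of (x : X) (h4 : ‖x‖ ≤ 4) (hj : ∀ j : JIdx, |Psi fv j x| ≤ 1) :
    NN fv x ≤ 1 := by
  apply max_le (by linarith) (ciSup_le hj)

include hfv in
lemma NN_eq_of (x : X) (B : ℝ) (h4 : ‖x‖ / 4 ≤ B) (hj : ∀ j : JIdx, |Psi fv j x| ≤ B)
    (j₀ : JIdx) (hj₀ : |Psi fv j₀ x| = B) : NN fv x = B := by
  apply le_antisymm (max_le h4 (ciSup_le hj))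
  calc B = |Psi fv j₀ x| := hj₀.symm
    _ ≤ NN fv x := Psi_le_NN fv hfv x j₀

-- evaluations on the point z₀ = ev none
include hbio in
lemma Psi_z0 (j : JIdx) : Psi fv j (ev none) =
    (match j with
      | Sum.inl _ => 1
      | Sum.inr (Sum.inl _) => 0
      | Sum.inr (Sum.inr (Sum.inl _)) => 1
      | Sum.inr (Sum.inr (Sum.inr _)) => 1) := by
  rcases j with _ | (n | (n | t))
  · simp [Psi, hbio]
  · simp [Psi, hbio]
  · simp [Psi, hfun, hbio]
  · simp [Psi, gfun, hbio, phi_none ev fv hbio]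

include hev hfv hbio in
lemma NN_z0 : NN fv (ev none) = 1 := by
  refine NN_eq_of fv hfv _ 1 ?_ ?_ (Sum.inl ()) ?_
  · rw [hev none]; norm_num
  · intro j
    rw [Psi_z0 ev fv hbio j]
    rcases j with _ | (n | (n | t)) <;> norm_num
  · rw [Psi_z0 ev fv hbio]; norm_num

-- evaluations on tree direction vectors
include hbio in
lemma Psi_w (t : List Bool) (j : JIdx) : Psi fv j (wv ev t) =
    (match j with
      | Sum.inl _ => 0
      | Sum.inr (Sum.inl _) => 0
      | Sum.inr (Sum.inr (Sum.inl _)) => 0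
      | Sum.inr (Sum.inr (Sum.inr s)) => if s = t then -2 else 0) := by
  rcases j with _ | (n | (n | s))
  · simp [Psi, wv, map_sub, map_smul, map_add, hbio]
  · simp [Psi, wv, map_sub, map_smul, map_add, hbio]
  · simp [Psi, hfun, wv, map_sub, map_smul, map_add, hbio]
  · have h1 : fv none (wv ev t) = 0 := by
      simp [wv, map_sub, map_smul, map_add, hbio]
    simp only [Psi, gfun, ContinuousLinearMap.add_apply, h1, phi_w ev fv hbio, zero_add]

include hev in
lemma norm_w_le (t : List Bool) : ‖wv ev t‖ ≤ 2 := by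
  rw [wv]
  calc ‖ev (some (Sum.inl t)) - (2⁻¹ : ℝ) •
        (ev (some (Sum.inl (true :: t))) + ev (some (Sum.inl (false :: t))))‖
      ≤ ‖ev (some (Sum.inl t))‖ + ‖(2⁻¹ : ℝ) •
        (ev (some (Sum.inl (true :: t))) + ev (some (Sum.inl (false :: t))))‖ := norm_sub_le _ _
    _ ≤ 1 + 2⁻¹ * (1 + 1) := by
        apply add_le_add (le_of_eq (hev _))
        rw [norm_smul]
        apply mul_le_mul (by simp) ?_ (norm_nonneg _) (by norm_num)
        exact (norm_add_le _ _).trans (by rw [hev, hev])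
    _ = 2 := by norm_num

include hev hfv hbio in
lemma NN_v_le (t : List Bool) : NN fv (vv ev t) ≤ 1 := by
  apply NN_le_one_of fv hfv
  · rw [vv]
    calc ‖ev none + wv ev t‖ ≤ ‖ev none‖ + ‖wv ev t‖ := norm_add_le _ _
      _ ≤ 1 + 2 := add_le_add (le_of_eq (hev _)) (norm_w_le ev hev t)
      _ ≤ 4 := by norm_num
  · intro j
    have hsplit : Psi fv j (vv ev t) = Psi fv j (ev none) + Psi fv j (wv ev t) := by
      rw [vv, map_add]
    rw [hsplit, Psi_z0 ev fv hbio j, Psi_w ev fv hbio t j]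
    rcases j with _ | (n | (n | s))
    · norm_num
    · norm_num
    · norm_num
    · dsimp only
      rcases eq_or_ne s t with h | h
      · rw [if_pos h]; norm_num
      · rw [if_neg h]; norm_num

include hev hfv hbio in
lemma NN_w_eq (t : List Bool) : NN fv (wv ev t) = 2 := by
  apply le_antisymm
  · have h1 : wv ev t = vv ev t + (-1 : ℝ) • ev none := by
      rw [vv]; module
    rw [h1]
    calc NN fv (vv ev t + (-1 : ℝ) • ev none)
        ≤ NN fv (vv ev t) + NN fv ((-1 : ℝ) • ev none) := NN_add fv hfv _ _
      _ = NN fv (vv ev t) + NN fv (ev none) := by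
          rw [NN_smul fv hfv]; norm_num
      _ ≤ 1 + 1 := add_le_add (NN_v_le ev fv hev hfv hbio t) (le_of_eq (NN_z0 ev fv hev hfv hbio))
      _ = 2 := by norm_num
  · have h2 : |Psi fv (Sum.inr (Sum.inr (Sum.inr t)) : JIdx) (wv ev t)| = 2 := by
      rw [Psi_w ev fv hbio t]
      norm_num
    calc (2:ℝ) = |Psi fv (Sum.inr (Sum.inr (Sum.inr t)) : JIdx) (wv ev t)| := h2.symm
      _ ≤ NN fv (wv ev t) := Psi_le_NN fv hfv _ _

-- evaluations on dual witnesses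
include hbio in
lemma Psi_edual (n : ℕ) (j : JIdx) : Psi fv j (ev (some (Sum.inr n))) =
    (match j with
      | Sum.inl _ => 0
      | Sum.inr (Sum.inl m) => if m = n then 1 else 0
      | Sum.inr (Sum.inr (Sum.inl m)) => if m = n then -2 else 0
      | Sum.inr (Sum.inr (Sum.inr _)) => 0) := by
  rcases j with _ | (m | (m | s))
  · simp [Psi, hbio]
  · simp only [Psi, hbio]
    rcases eq_or_ne m n with h | h
    · rw [if_pos (by rw [h]), if_pos h]
    · rw [if_neg (by simp [h]), if_neg h]
  · simp only [Psi, hfun, ContinuousLinearMap.sub_apply, ContinuousLinearMap.smul_apply,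
      hbio, smul_eq_mul]
    rcases eq_or_ne m n with h | h
    · rw [if_neg (by simp), if_pos (by rw [h]), if_pos h]
      norm_num
    · rw [if_neg (by simp), if_neg (by simp [h]), if_neg h]
      norm_num
  · simp only [Psi, gfun, ContinuousLinearMap.add_apply, hbio,
      phi_dual ev fv hbio n s]
    rw [if_neg (by simp)]
    norm_num

include hev hfv hbio in
lemma NN_u_le (n : ℕ) : NN fv (uv ev n) ≤ 1 := by
  apply NN_le_one_of fv hfv
  · rw [uv]
    calc ‖ev none + ev (some (Sum.inr n))‖ ≤ ‖ev none‖ + ‖ev (some (Sum.inr n))‖ :=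
          norm_add_le _ _
      _ ≤ 1 + 1 := add_le_add (le_of_eq (hev _)) (le_of_eq (hev _))
      _ ≤ 4 := by norm_num
  · intro j
    have hsplit : Psi fv j (uv ev n) = Psi fv j (ev none) + Psi fv j (ev (some (Sum.inr n))) := by
      rw [uv, map_add]
    rw [hsplit, Psi_z0 ev fv hbio j, Psi_edual ev fv hbio n j]
    rcases j with _ | (m | (m | s))
    · norm_num
    · dsimp only
      rcases eq_or_ne m n with h | h
      · rw [if_pos h]; norm_num
      · rw [if_neg h]; norm_num
    · dsimp only
      rcases eq_or_ne m n with h | h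
      · rw [if_pos h]; norm_num
      · rw [if_neg h]; norm_num
    · norm_num

include hbio in
lemma fdual_u (n : ℕ) : fv (some (Sum.inr n)) (uv ev n) = 1 := by
  simp [uv, hbio]

end valueLemmas

section mainArgs

include hfv in
lemma NN_zero : NN fv (0 : X) = 0 := by
  have h1 : (⨆ j : JIdx, |Psi fv j (0 : X)|) = 0 := by
    have : ∀ j : JIdx, |Psi fv j (0 : X)| = 0 := by intro j; simp
    simp only [this]
    exact ciSup_const
  simp [NN, h1]

include hfv in
lemma NN_ball_norm (x : X) (h : NN fv x ≤ 1) : ‖x‖ ≤ 4 := by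
  have := norm_le_NN fv x
  linarith

include hfv in
lemma opnorm_of_ball (F : X →L[ℝ] ℝ) (hb : ∀ y, NN fv y ≤ 1 → F y ≤ 1) (x : X) :
    |F x| ≤ 40 * ‖x‖ := by
  rcases eq_or_ne x 0 with rfl | hx
  · simp
  · have hnx : (0:ℝ) < ‖x‖ := norm_pos_iff.mpr hx
    set y : X := (40 * ‖x‖)⁻¹ • x with hy
    have hNy : NN fv y ≤ 1 := by
      rw [hy, NN_smul fv hfv, abs_of_nonneg (by positivity)]
      calc (40 * ‖x‖)⁻¹ * NN fv x ≤ (40 * ‖x‖)⁻¹ * (40 * ‖x‖) :=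
            mul_le_mul_of_nonneg_left (NN_le_norm fv hfv x) (by positivity)
        _ = 1 := by field_simp
    have hNy' : NN fv (-y) ≤ 1 := by
      rw [show -y = (-1 : ℝ) • y by module, NN_smul fv hfv]
      simpa using hNy
    have h1 := hb y hNy
    have h2 := hb (-y) hNy'
    rw [map_neg] at h2
    have hyx : F y = (40 * ‖x‖)⁻¹ * F x := by rw [hy, map_smul, smul_eq_mul]
    rw [hyx] at h1 h2
    have h40 : (0:ℝ) < 40 * ‖x‖ := by positivity
    have h1' : F x ≤ 40 * ‖x‖ := by
      have h3 := mul_le_mul_of_nonneg_left h1 h40.le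
      rwa [mul_one, ← mul_assoc, mul_inv_cancel₀ h40.ne', one_mul] at h3
    have h2' : -F x ≤ 40 * ‖x‖ := by
      have h3 := mul_le_mul_of_nonneg_left h2 h40.le
      rwa [mul_one, mul_neg, ← mul_assoc, mul_inv_cancel₀ h40.ne', one_mul] at h3
    rw [abs_le]
    exact ⟨by linarith, h1'⟩

include hev hfv hbio in
lemma exists_slice_witness (F : X →L[ℝ] ℝ) (hb : ∀ y, NN fv y ≤ 1 → F y ≤ 1)
    (ε : ℝ) (hz : 1 - ε < F (ev none)) :
    ∃ t : List Bool, 1 - ε < F (vv ev t) := by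
  by_contra hall
  push_neg at hall
  set ρ : ℝ := F (ev none) - (1 - ε) with hρ
  have hρpos : 0 < ρ := by rw [hρ]; linarith
  have hw : ∀ t : List Bool, F (wv ev t) ≤ -ρ := by
    intro t
    have h1 := hall t
    have h2 : F (vv ev t) = F (ev none) + F (wv ev t) := by rw [vv, map_add]
    rw [hρ]; linarith [h2 ▸ h1]
  have hFnorm : ∀ x : X, |F x| ≤ 40 * ‖x‖ := opnorm_of_ball fv hfv F hb
  -- level sums
  set S : ℕ → ℝ := fun d => ∑ v : Fin d → Bool, F (ev (some (Sum.inl (List.ofFn v)))) with hS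
  have hScard : ∀ d, |S d| ≤ 40 * 2 ^ d := by
    intro d
    calc |S d| ≤ ∑ v : Fin d → Bool, |F (ev (some (Sum.inl (List.ofFn v))))| :=
          Finset.abs_sum_le_sum_abs _ _
      _ ≤ ∑ _v : Fin d → Bool, (40 : ℝ) := by
          apply Finset.sum_le_sum
          intro v _
          calc |F (ev (some (Sum.inl (List.ofFn v))))| ≤ 40 * ‖ev (some (Sum.inl (List.ofFn v)))‖ :=
                hFnorm _
            _ = 40 := by rw [hev]; norm_num
      _ = 40 * 2 ^ d := by
          rw [Finset.sum_const]
          simp [Fintype.card_fun]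
          ring
  have hkey1 : ∀ d : ℕ, (∑ v : Fin d → Bool, F (wv ev (List.ofFn v)))
      = S d - 2⁻¹ * S (d + 1) := by
    intro d
    have hterm : ∀ v : Fin d → Bool, F (wv ev (List.ofFn v))
        = F (ev (some (Sum.inl (List.ofFn v))))
          - 2⁻¹ * (F (ev (some (Sum.inl (true :: List.ofFn v))))
            + F (ev (some (Sum.inl (false :: List.ofFn v))))) := by
      intro v
      rw [wv, map_sub, map_smul, map_add, smul_eq_mul]
    have hsucc : S (d + 1)
        = (∑ v : Fin d → Bool, F (ev (some (Sum.inl (true :: List.ofFn v)))))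
          + (∑ v : Fin d → Bool, F (ev (some (Sum.inl (false :: List.ofFn v))))) := by
      have h0 : S (d + 1) = ∑ w : Fin (d + 1) → Bool, F (ev (some (Sum.inl (List.ofFn w)))) := rfl
      rw [h0, ← (Fin.consEquiv (fun _ : Fin (d + 1) => Bool)).sum_comp
        (fun w => F (ev (some (Sum.inl (List.ofFn w)))))]
      rw [Fintype.sum_prod_type, Fintype.sum_bool]
      congr 1 <;>
      · apply Finset.sum_congr rfl
        intro v _
        congr 2
        rw [List.ofFn_succ]
        simp [Fin.consEquiv]
    have h1 : (∑ v : Fin d → Bool, F (wv ev (List.ofFn v)))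
        = (∑ v : Fin d → Bool, F (ev (some (Sum.inl (List.ofFn v)))))
          - 2⁻¹ * ((∑ v : Fin d → Bool, F (ev (some (Sum.inl (true :: List.ofFn v)))))
            + (∑ v : Fin d → Bool, F (ev (some (Sum.inl (false :: List.ofFn v)))))) := by
      rw [Finset.sum_congr rfl (fun v _ => hterm v), Finset.sum_sub_distrib, ← Finset.mul_sum,
        Finset.sum_add_distrib]
    rw [h1, ← hsucc]
  set a : ℕ → ℝ := fun d => (2⁻¹ : ℝ) ^ d * S d with ha
  have hkey3 : ∀ d : ℕ, a d - a (d + 1) ≤ -ρ := by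
    intro d
    have h1 : a d - a (d + 1) = (2⁻¹ : ℝ) ^ d * (S d - 2⁻¹ * S (d + 1)) := by
      rw [ha]; ring
    rw [h1, ← hkey1 d]
    have h2 : (∑ v : Fin d → Bool, F (wv ev (List.ofFn v))) ≤ (2 ^ d : ℝ) * (-ρ) := by
      calc (∑ v : Fin d → Bool, F (wv ev (List.ofFn v))) ≤ ∑ _v : Fin d → Bool, (-ρ) :=
            Finset.sum_le_sum (fun v _ => hw _)
        _ = (2 ^ d : ℝ) * (-ρ) := by
            rw [Finset.sum_const]
            simp [Fintype.card_fun]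
    calc (2⁻¹ : ℝ) ^ d * (∑ v : Fin d → Bool, F (wv ev (List.ofFn v)))
        ≤ (2⁻¹ : ℝ) ^ d * ((2 ^ d : ℝ) * (-ρ)) := by
          apply mul_le_mul_of_nonneg_left h2 (by positivity)
      _ = -ρ := by
          rw [← mul_assoc, ← mul_pow]
          norm_num
  obtain ⟨L, hL⟩ := exists_nat_gt (80 / ρ)
  have htel : (∑ d ∈ Finset.range (L + 1), (a d - a (d + 1))) = a 0 - a (L + 1) :=
    Finset.sum_range_sub' a (L + 1)
  have hsum_le : (∑ d ∈ Finset.range (L + 1), (a d - a (d + 1))) ≤ (L + 1 : ℝ) * (-ρ) := by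
    calc (∑ d ∈ Finset.range (L + 1), (a d - a (d + 1)))
        ≤ ∑ _d ∈ Finset.range (L + 1), (-ρ) := Finset.sum_le_sum (fun d _ => hkey3 d)
      _ = (L + 1 : ℝ) * (-ρ) := by
          rw [Finset.sum_const]
          simp
  have ha0 : |a 0| ≤ 40 := by
    rw [ha]
    simpa using hScard 0
  have haL : |a (L + 1)| ≤ 40 := by
    rw [ha, abs_mul]
    have h1 : |(2⁻¹ : ℝ) ^ (L + 1)| = (2⁻¹ : ℝ) ^ (L + 1) := abs_of_nonneg (by positivity)
    rw [h1]
    calc (2⁻¹ : ℝ) ^ (L + 1) * |S (L + 1)| ≤ (2⁻¹ : ℝ) ^ (L + 1) * (40 * 2 ^ (L + 1)) :=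
          mul_le_mul_of_nonneg_left (hScard _) (by positivity)
      _ = 40 := by
          rw [show (2⁻¹ : ℝ) ^ (L + 1) * (40 * 2 ^ (L + 1))
            = 40 * ((2⁻¹ : ℝ) * 2) ^ (L + 1) by rw [mul_pow]; ring]
          norm_num
  have hlow : -(80 : ℝ) ≤ a 0 - a (L + 1) := by
    have h1 := (abs_le.mp ha0).1
    have h2 := (abs_le.mp haL).2
    linarith
  rw [htel] at hsum_le
  have hfin : ρ * (L + 1) ≤ 80 := by nlinarith
  have : (80 : ℝ) < ρ * L := by
    rw [div_lt_iff₀ hρpos] at hL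
    linarith [hL]
  nlinarith [hρpos]

end mainArgs

section finalLemmas

include hfv in
lemma final_equiv : IsEquivNorm X (NN fv) := by
  refine ⟨NN_add fv hfv, NN_smul fv hfv, 1/4, 40, by norm_num, by norm_num, fun z => ⟨?_, ?_⟩⟩
  · have := norm_le_NN fv z
    linarith
  · exact NN_le_norm fv hfv z

include hev hfv hbio in
lemma final_primal : HasDeltaPointForNorm X (NN fv) := by
  refine ⟨ev none, NN_z0 ev fv hev hfv hbio, ?_⟩
  intro F hsup ε hε hz
  have himgbdd : BddAbove (⇑F '' {y : X | NN fv y ≤ 1}) := by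
    refine ⟨‖F‖ * 4, ?_⟩
    rintro r ⟨y, hy, rfl⟩
    calc F y ≤ |F y| := le_abs_self _
      _ ≤ ‖F‖ * ‖y‖ := F.le_opNorm y
      _ ≤ ‖F‖ * 4 := mul_le_mul_of_nonneg_left (NN_ball_norm fv hfv y hy) (norm_nonneg F)
  have hb : ∀ y, NN fv y ≤ 1 → F y ≤ 1 := by
    intro y hy
    rw [← hsup]
    exact le_csSup himgbdd ⟨y, hy, rfl⟩
  obtain ⟨t, ht⟩ := exists_slice_witness ev fv hev hfv hbio F hb ε hz
  apply IsGreatest.csSup_eq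
  constructor
  · refine ⟨vv ev t, ⟨NN_v_le ev fv hev hfv hbio t, ht⟩, ?_⟩
    show NN fv (ev none - vv ev t) = 2
    have h1 : ev none - vv ev t = (-1 : ℝ) • wv ev t := by rw [vv]; module
    rw [h1, NN_smul fv hfv]
    rw [NN_w_eq ev fv hev hfv hbio t]
    norm_num
  · rintro r ⟨y, ⟨hy1, _⟩, rfl⟩
    show NN fv (ev none - y) ≤ 2
    have h1 : ev none - y = ev none + (-1 : ℝ) • y := by module
    rw [h1]
    calc NN fv (ev none + (-1 : ℝ) • y) ≤ NN fv (ev none) + NN fv ((-1 : ℝ) • y) :=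
          NN_add fv hfv _ _
      _ = NN fv (ev none) + NN fv y := by rw [NN_smul fv hfv]; norm_num
      _ ≤ 1 + 1 := add_le_add (le_of_eq (NN_z0 ev fv hev hfv hbio)) hy1
      _ = 2 := by norm_num

include hev hfv hbio in
lemma dual_ball_bdd (h : StrongDual ℝ X) :
    BddAbove (⇑h '' {y : X | NN fv y ≤ 1}) := by
  refine ⟨‖h‖ * 4, ?_⟩
  rintro r ⟨y, hy, rfl⟩
  calc h y ≤ |h y| := le_abs_self _
    _ ≤ ‖h‖ * ‖y‖ := h.le_opNorm y
    _ ≤ ‖h‖ * 4 := mul_le_mul_of_nonneg_left (NN_ball_norm fv hfv y hy) (norm_nonneg h)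

include hfv in
lemma dual_ball_nonempty (h : StrongDual ℝ X) :
    (⇑h '' {y : X | NN fv y ≤ 1}).Nonempty := by
  exact ⟨h 0, ⟨0, by simp [Set.mem_setOf_eq, NN_zero fv hfv], rfl⟩⟩

include hev hfv hbio in
lemma dual_norm_2fd (n : ℕ) :
    dualNormOf X (NN fv) ((2:ℝ) • fv (some (Sum.inr n))) = 2 := by
  apply IsGreatest.csSup_eq
  constructor
  · refine ⟨uv ev n, Set.mem_setOf_eq ▸ NN_u_le ev fv hev hfv hbio n, ?_⟩
    show ((2:ℝ) • fv (some (Sum.inr n))) (uv ev n) = 2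
    rw [ContinuousLinearMap.smul_apply, fdual_u ev fv hbio n, smul_eq_mul, mul_one]
  · rintro r ⟨y, hy, rfl⟩
    show ((2:ℝ) • fv (some (Sum.inr n))) y ≤ 2
    rw [ContinuousLinearMap.smul_apply, smul_eq_mul]
    have h1 : fv (some (Sum.inr n)) y ≤ NN fv y := by
      calc fv (some (Sum.inr n)) y ≤ |fv (some (Sum.inr n)) y| := le_abs_self _
        _ = |Psi fv (Sum.inr (Sum.inl n)) y| := rfl
        _ ≤ NN fv y := Psi_le_NN fv hfv y _
    have h2 : NN fv y ≤ 1 := hy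
    linarith

include hev hfv hbio in
lemma final_dual
    (hclu : ∀ U : Set (WeakDual ℝ X), IsOpen U →
      StrongDual.toWeakDual (fv none) ∈ U →
        ∃ n : ℕ, StrongDual.toWeakDual
          (fv none - (2:ℝ) • fv (some (Sum.inr n))) ∈ U) :
    DualHasWeakStarSuperDeltaPointForNorm X (NN fv) := by
  refine ⟨fv none, ?_, ?_⟩
  · apply IsGreatest.csSup_eq
    constructor
    · refine ⟨ev none, Set.mem_setOf_eq ▸ le_of_eq (NN_z0 ev fv hev hfv hbio), ?_⟩
      show fv none (ev none) = 1
      rw [hbio]; simp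
    · rintro r ⟨y, hy, rfl⟩
      calc fv none y ≤ |fv none y| := le_abs_self _
        _ = |Psi fv (Sum.inl ()) y| := rfl
        _ ≤ NN fv y := Psi_le_NN fv hfv y _
        _ ≤ 1 := hy
  · intro U hU hmem
    obtain ⟨n, hn⟩ := hclu U hU hmem
    apply IsGreatest.csSup_eq
    constructor
    · refine ⟨hfun fv n, ⟨?_, ?_⟩, ?_⟩
      · -- dual norm of the witness functional is ≤ 1
        apply csSup_le (dual_ball_nonempty fv hfv _)
        rintro r ⟨y, hy, rfl⟩
        calc hfun fv n y ≤ |hfun fv n y| := le_abs_self _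
          _ = |Psi fv (Sum.inr (Sum.inr (Sum.inl n))) y| := rfl
          _ ≤ NN fv y := Psi_le_NN fv hfv y _
          _ ≤ 1 := hy
      · exact hn
      · show dualNormOf X (NN fv) (fv none - hfun fv n) = 2
        have h1 : fv none - hfun fv n = (2:ℝ) • fv (some (Sum.inr n)) := by
          rw [hfun]; module
        rw [h1]
        exact dual_norm_2fd ev fv hev hfv hbio n
    · rintro r ⟨h, ⟨hh1, _⟩, rfl⟩
      show dualNormOf X (NN fv) (fv none - h) ≤ 2
      apply csSup_le (dual_ball_nonempty fv hfv _)
      rintro r ⟨y, hy, rfl⟩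
      show (fv none - h) y ≤ 2
      rw [ContinuousLinearMap.sub_apply]
      have h1 : fv none y ≤ 1 := by
        calc fv none y ≤ |fv none y| := le_abs_self _
          _ = |Psi fv (Sum.inl ()) y| := rfl
          _ ≤ NN fv y := Psi_le_NN fv hfv y _
          _ ≤ 1 := hy
      have h2 : -(h y) ≤ 1 := by
        have hym : NN fv (-y) ≤ 1 := by
          rw [show -y = (-1:ℝ) • y by module, NN_smul fv hfv]
          simpa using (hy : NN fv y ≤ 1)
        have h3 : h (-y) ≤ dualNormOf X (NN fv) h :=
          le_csSup (dual_ball_bdd ev fv hev hfv hbio h) ⟨-y, hym, rfl⟩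
        rw [map_neg] at h3
        linarith [h3.trans hh1]
      linarith

end finalLemmas

end withSys

end DeltaRenormAux

/-- Every infinite-dimensional real Banach space admits an equivalent norm `N` such that
`(X, N)` has a Δ-point and the dual space with the dual norm `N*` has a weak* super
Δ-point. -/
theorem renorming_deltaPoint_and_dual_weakStarSuperDeltaPoint
    (X : Type*) [NormedAddCommGroup X] [NormedSpace ℝ X] [CompleteSpace X]
    (hinf : ¬ FiniteDimensional ℝ X) :
    ∃ N : X → ℝ, IsEquivNorm X N ∧ HasDeltaPointForNorm X N ∧
      DualHasWeakStarSuperDeltaPointForNorm X N := by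
  obtain ⟨ev, fv, hev, hfv, hbio, hclu⟩ := DeltaRenormAux.exists_sys hinf
  exact ⟨DeltaRenormAux.NN fv, DeltaRenormAux.final_equiv fv hfv,
    DeltaRenormAux.final_primal ev fv hev hfv hbio,
    DeltaRenormAux.final_dual ev fv hev hfv hbio hclu⟩
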